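/- Let V, g, φ, ξ, η, A, D be as in the context, let k be a nonzero real number, suppose Aξ = αξ for some real number α (the Hopf case) and that A satisfies the Maeda relations for α. Then it is impossible that A_T^{(k)}(X, φY) = φ(A_T^{(k)}(X, Y)) for all X, Y ∈ D. (Theorem 7, Hopf case: for each principal pair one gets (μ − α)(λ + μ) = 0, and each alternative is incompatible with the Maeda relations.) -/

import Mathlib

open scoped InnerProductSpace

/-- The `k`-th Cho operator `F^{(k)}_X Y = g(φ(AX), Y)·ξ − η(Y)·φ(AX) − k·η(X)·φY`. -/
noncomputable def choF {V : Type*} [NormedAddCommGroup V] [InnerProductSpace ℝ V]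
    (φ A : V →ₗ[ℝ] V) (ξ : V) (k : ℝ) (X Y : V) : V :=
  ⟪φ (A X), Y⟫_ℝ • ξ - ⟪Y, ξ⟫_ℝ • φ (A X) - (k * ⟪X, ξ⟫_ℝ) • φ Y

/-- The `k`-th torsion operator `T^{(k)}_X Y = F^{(k)}_X Y − F^{(k)}_Y X`. -/
noncomputable def torT {V : Type*} [NormedAddCommGroup V] [InnerProductSpace ℝ V]
    (φ A : V →ₗ[ℝ] V) (ξ : V) (k : ℝ) (X Y : V) : V :=
  choF φ A ξ k X Y - choF φ A ξ k Y X

/-- `A_T^{(k)}(X, Y) = T^{(k)}_X (A Y) − A (T^{(k)}_X Y)`. -/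
noncomputable def AT {V : Type*} [NormedAddCommGroup V] [InnerProductSpace ℝ V]
    (φ A : V →ₗ[ℝ] V) (ξ : V) (k : ℝ) (X Y : V) : V :=
  torT φ A ξ k X (A Y) - A (torT φ A ξ k X Y)


private theorem thm7_aux {V : Type*} [NormedAddCommGroup V] [InnerProductSpace ℝ V]
    (φ : V →ₗ[ℝ] V) (ξ : V) (hξ2 : ⟪ξ, ξ⟫_ℝ = 1)
    (hφφ : ∀ X : V, φ (φ X) = -X + ⟪X, ξ⟫_ℝ • ξ)
    (hφg : ∀ X Y : V, ⟪φ X, φ Y⟫_ℝ = ⟪X, Y⟫_ℝ - ⟪X, ξ⟫_ℝ * ⟪Y, ξ⟫_ℝ)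
    (hηφ : ∀ X : V, ⟪φ X, ξ⟫_ℝ = 0)
    (hskew : ∀ X Y : V, ⟪φ X, Y⟫_ℝ = -⟪X, φ Y⟫_ℝ)
    (hφξ : φ ξ = 0)
    (A : V →ₗ[ℝ] V) (k : ℝ) (α : ℝ) (hAξ : A ξ = α • ξ)
    (hMaeda : ∀ (X : V) (l : ℝ), ‖X‖ = 1 → ⟪X, ξ⟫_ℝ = 0 → A X = l • X →
      2 * l - α ≠ 0 ∧ A (φ X) = ((α * l + 2) / (2 * l - α)) • φ X)
    (X : V) (l : ℝ) (hX1 : ‖X‖ = 1) (hXξ : ⟪X, ξ⟫_ℝ = 0) (hAX : A X = l • X)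
    (h : ∀ X Y : V, ⟪X, ξ⟫_ℝ = 0 → ⟪Y, ξ⟫_ℝ = 0 →
      AT φ A ξ k X (φ Y) = φ (AT φ A ξ k X Y)) : False := by
  have hX0 : X ≠ 0 := by intro h0; rw [h0, norm_zero] at hX1; norm_num at hX1
  have hXX : ⟪X, X⟫_ℝ = 1 := by
    rw [real_inner_self_eq_norm_sq, hX1]; norm_num
  have hpp : ⟪φ X, φ X⟫_ℝ = 1 := by rw [hφg, hXX, hXξ]; ring
  have hXp : ⟪X, φ X⟫_ℝ = 0 := by
    have h1 := hskew X X
    have h2 := real_inner_comm (φ X) X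
    linarith [h1, h2]
  have hpX : ⟪φ X, X⟫_ℝ = 0 := by rw [real_inner_comm]; exact hXp
  have hφXξ : ⟪φ X, ξ⟫_ℝ = 0 := hηφ X
  have hφX1 : ‖φ X‖ = 1 := by
    have h1 : ‖φ X‖ ^ 2 = 1 := by rw [← real_inner_self_eq_norm_sq]; exact hpp
    nlinarith [norm_nonneg (φ X)]
  have hφφX : φ (φ X) = -X := by rw [hφφ X, hXξ]; simp
  obtain ⟨hl, hAφX⟩ := hMaeda X l hX1 hXξ hAX
  set μ : ℝ := (α * l + 2) / (2 * l - α) with hμdef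
  have hμeq : μ * (2 * l - α) = α * l + 2 := div_mul_cancel₀ _ hl
  obtain ⟨hμl, hAφφX⟩ := hMaeda (φ X) μ hφX1 hφXξ hAφX
  rw [hφφX, map_neg, hAX, smul_neg, neg_inj] at hAφφX
  have hνeq : l * (2 * μ - α) = α * μ + 2 := by
    have h1 : (l - (α * μ + 2) / (2 * μ - α)) • X = 0 := by
      rw [sub_smul, hAφφX, sub_self]
    rcases smul_eq_zero.1 h1 with h2 | h2
    · have h3 : l = (α * μ + 2) / (2 * μ - α) := by linarith [sub_eq_zero.1 h2]
      rw [h3]; exact div_mul_cancel₀ _ hμl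
    · exact absurd h2 hX0
  have E1 := congrArg (fun w => ⟪w, ξ⟫_ℝ) (h X X hXξ hXξ)
  simp only [AT, torT, choF, hAφX, hAX, map_smul, map_sub, map_neg, hφφX, hAξ, hφξ,
    inner_sub_left, inner_neg_left, inner_neg_right, real_inner_smul_left,
    real_inner_smul_right, smul_smul, smul_neg,
    hXξ, hφXξ, hXX, hpp, hXp, hpX, hξ2, hηφ, inner_zero_left, inner_zero_right,
    smul_zero, zero_smul, mul_zero, zero_mul, mul_one, sub_zero, zero_sub, neg_zero,
    mul_neg, neg_neg] at E1
  have eq1 : (l + μ) * (μ - α) = 0 := by linear_combination E1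
  have E2 := congrArg (fun w => ⟪w, ξ⟫_ℝ) (h (φ X) (φ X) hφXξ hφXξ)
  simp only [AT, torT, choF, hφφX, hAφX, hAX, map_smul, map_sub, map_neg, hAξ, hφξ,
    inner_sub_left, inner_neg_left, inner_neg_right, real_inner_smul_left,
    real_inner_smul_right, smul_smul, smul_neg,
    hXξ, hφXξ, hXX, hpp, hXp, hpX, hξ2, hηφ, inner_zero_left, inner_zero_right,
    smul_zero, zero_smul, mul_zero, zero_mul, mul_one, sub_zero, zero_sub, neg_zero,
    mul_neg, neg_neg] at E2
  have eq2 : (l + μ) * (l - α) = 0 := by linear_combination E2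
  rcases mul_eq_zero.1 eq1 with h1 | h1
  · nlinarith [hμeq, sq_nonneg l]
  · rcases mul_eq_zero.1 eq2 with h2 | h2
    · nlinarith [hμeq, sq_nonneg l]
    · nlinarith [hμeq, h1, h2]

theorem thm7_hopf {V : Type*} [NormedAddCommGroup V] [InnerProductSpace ℝ V]
    [FiniteDimensional ℝ V] (hdim : 5 ≤ Module.finrank ℝ V)
    (φ : V →ₗ[ℝ] V) (ξ : V) (hξ : ‖ξ‖ = 1)
    (hφφ : ∀ X : V, φ (φ X) = -X + ⟪X, ξ⟫_ℝ • ξ)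
    (hφg : ∀ X Y : V, ⟪φ X, φ Y⟫_ℝ = ⟪X, Y⟫_ℝ - ⟪X, ξ⟫_ℝ * ⟪Y, ξ⟫_ℝ)
    (A : V →ₗ[ℝ] V) (hA : ∀ X Y : V, ⟪A X, Y⟫_ℝ = ⟪X, A Y⟫_ℝ)
    (k : ℝ) (hk : k ≠ 0)
    (α : ℝ) (hAξ : A ξ = α • ξ)
    (hMaeda : ∀ (X : V) (l : ℝ), ‖X‖ = 1 → ⟪X, ξ⟫_ℝ = 0 → A X = l • X →
      2 * l - α ≠ 0 ∧ A (φ X) = ((α * l + 2) / (2 * l - α)) • φ X) :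
    ¬ (∀ X Y : V, ⟪X, ξ⟫_ℝ = 0 → ⟪Y, ξ⟫_ℝ = 0 →
      AT φ A ξ k X (φ Y) = φ (AT φ A ξ k X Y)) := by
  intro h
  have hξ2 : ⟪ξ, ξ⟫_ℝ = 1 := by
    rw [real_inner_self_eq_norm_sq, hξ]; norm_num
  have hφξ : φ ξ = 0 := by
    have h1 := hφg ξ ξ
    rw [hξ2] at h1
    rw [← @inner_self_eq_zero ℝ]
    rw [h1]; ring
  have hηφ : ∀ X : V, ⟪φ X, ξ⟫_ℝ = 0 := by
    intro X
    have h1 := hφg (φ X) (φ X)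
    rw [hφφ X] at h1
    have h2 := hφg X X
    have h3 : ⟪-X + ⟪X, ξ⟫_ℝ • ξ, -X + ⟪X, ξ⟫_ℝ • ξ⟫_ℝ
        = ⟪X, X⟫_ℝ - ⟪X, ξ⟫_ℝ * ⟪X, ξ⟫_ℝ := by
      simp only [inner_add_left, inner_add_right, inner_neg_left, inner_neg_right,
        real_inner_smul_left, real_inner_smul_right, hξ2, real_inner_comm X ξ]
      ring
    rw [h3, h2] at h1
    nlinarith [h1]
  have hskew : ∀ X Y : V, ⟪φ X, Y⟫_ℝ = -⟪X, φ Y⟫_ℝ := by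
    intro X Y
    have h1 := hφg X (φ Y)
    rw [hφφ Y] at h1
    simp [inner_add_right, real_inner_smul_right, hηφ] at h1
    linarith [h1]
  -- existence of a unit principal vector orthogonal to ξ
  have hξ0 : ξ ≠ 0 := by intro h0; rw [h0, norm_zero] at hξ; norm_num at hξ
  set K : Submodule ℝ V := (ℝ ∙ ξ)ᗮ with hK
  have hAK : ∀ x ∈ K, A x ∈ K := by
    intro x hx
    rw [Submodule.mem_orthogonal] at hx ⊢
    intro u hu
    rcases Submodule.mem_span_singleton.1 hu with ⟨c, rfl⟩
    have hxξ : ⟪ξ, x⟫_ℝ = 0 := hx ξ (Submodule.mem_span_singleton_self ξ)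
    have : ⟪ξ, A x⟫_ℝ = 0 := by
      rw [← hA, hAξ, real_inner_smul_left, hxξ]; ring
    rw [real_inner_smul_left, this]; ring
  have hKne : Nontrivial K := by
    rw [Submodule.nontrivial_iff_ne_bot]
    intro hbot
    have htop : (ℝ ∙ ξ) = ⊤ := Submodule.orthogonal_eq_bot_iff.1 hbot
    have h1 : Module.finrank ℝ V = 1 := by
      rw [← finrank_top ℝ V, ← htop, finrank_span_singleton hξ0]
    omega
  set T : K →ₗ[ℝ] K := A.restrict hAK with hT
  have hTsym : T.IsSymmetric := by
    intro x y
    have h1 : ⟪(A x : V), (y : V)⟫_ℝ = ⟪(x : V), (A y : V)⟫_ℝ := hA x y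
    simpa [hT, Submodule.coe_inner, LinearMap.restrict_coe_apply] using h1
  have key : ∀ (l0 : ℝ) (v : K), Module.End.HasEigenvector T l0 v →
      ∃ (X : V) (l : ℝ), ‖X‖ = 1 ∧ ⟪X, ξ⟫_ℝ = 0 ∧ A X = l • X := by
    intro l0 v hv
    have hv0 : (v : V) ≠ 0 := by
      simpa using Subtype.coe_injective.ne hv.2
    have hvA : A (v : V) = l0 • (v : V) := by
      have h1 := congrArg (Subtype.val) hv.apply_eq_smul
      simpa [hT, LinearMap.restrict_coe_apply] using h1
    refine ⟨‖(v:V)‖⁻¹ • (v : V), l0, ?_, ?_, ?_⟩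
    · rw [norm_smul, norm_inv, norm_norm, inv_mul_cancel₀ (norm_ne_zero_iff.2 hv0)]
    · rw [real_inner_smul_left]
      have hvmem : (v:V) ∈ (ℝ ∙ ξ)ᗮ := v.2
      have h2 := (Submodule.mem_orthogonal _ _).1 hvmem ξ (Submodule.mem_span_singleton_self ξ)
      rw [real_inner_comm] at h2
      rw [h2]; ring
    · rw [map_smul, hvA, smul_comm]
  obtain ⟨v, hv⟩ := (hTsym.hasEigenvalue_iSup_of_finiteDimensional).exists_hasEigenvector
  obtain ⟨X, l, hX1, hXξ, hAX⟩ := key _ v hv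
  exact thm7_aux φ ξ hξ2 hφφ hφg hηφ hskew hφξ A k α hAξ hMaeda X l hX1 hXξ hAX h
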